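/- Let μ ∈ ℝ, ν > 0, A > 0, and let θ be the (μ,ν,A)-truncated-Gaussian density with normalizing constant ρ. Then the differential entropy of θ satisfies −∫₀^A θ(x)·log θ(x) dx = (1/2)·log(2πe·ν²) − φ, where φ = log ρ + (1/2)·((A − μ)·θ(A) + μ·θ(0)). -/

import Mathlib

open MeasureTheory Real

/-- The Gaussian probability density with mean `μ` and variance `ν²`. -/
noncomputable def gaussPDF (μ ν : ℝ) (x : ℝ) : ℝ :=
  (ν * Real.sqrt (2 * Real.pi))⁻¹ * Real.exp (-(x - μ) ^ 2 / (2 * ν ^ 2))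

/-- The Gaussian cumulative distribution function. -/
noncomputable def gaussCDF (μ ν : ℝ) (x : ℝ) : ℝ :=
  ∫ t in Set.Iic x, gaussPDF μ ν t

/-- The normalizing constant `ρ = (G(A) - G(0))⁻¹` of the truncated Gaussian. -/
noncomputable def tgRho (μ ν A : ℝ) : ℝ := (gaussCDF μ ν A - gaussCDF μ ν 0)⁻¹

/-- The `(μ, ν, A)`-truncated-Gaussian density:
`θ(x) = ρ · g_{μ,ν}(x)` on `[0, A]` and `0` otherwise. -/
noncomputable def tgPDF (μ ν A : ℝ) (x : ℝ) : ℝ :=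
  if x ∈ Set.Icc 0 A then tgRho μ ν A * gaussPDF μ ν x else 0

lemma gaussPDF_pos (μ : ℝ) {ν : ℝ} (hν : 0 < ν) (x : ℝ) : 0 < gaussPDF μ ν x :=
  mul_pos (inv_pos.2 (mul_pos hν (Real.sqrt_pos.2 (by positivity)))) (Real.exp_pos _)

lemma continuous_gaussPDF (μ ν : ℝ) : Continuous (gaussPDF μ ν) := by
  unfold gaussPDF
  fun_prop

lemma gaussPDF_eq_gaussianPDFReal (μ : ℝ) {ν : ℝ} (hν : 0 < ν) :
    gaussPDF μ ν = ProbabilityTheory.gaussianPDFReal μ ⟨ν ^ 2, sq_nonneg ν⟩ := by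
  funext x
  simp only [gaussPDF, ProbabilityTheory.gaussianPDFReal, NNReal.coe_mk]
  congr 2
  change ν * √(2 * π) = √(2 * π * ν ^ 2)
  rw [show (2 : ℝ) * Real.pi * ν ^ 2 = ν ^ 2 * (2 * Real.pi) by ring,
    Real.sqrt_mul (sq_nonneg ν), Real.sqrt_sq hν.le]

lemma integrable_gaussPDF (μ : ℝ) {ν : ℝ} (hν : 0 < ν) : Integrable (gaussPDF μ ν) := by
  rw [gaussPDF_eq_gaussianPDFReal μ hν]
  exact ProbabilityTheory.integrable_gaussianPDFReal μ _

lemma integral_gaussPDF (μ : ℝ) {ν : ℝ} (hν : 0 < ν) (a b : ℝ) :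
    ∫ x in a..b, gaussPDF μ ν x = gaussCDF μ ν b - gaussCDF μ ν a := by
  unfold gaussCDF
  exact (intervalIntegral.integral_Iic_sub_Iic ((integrable_gaussPDF μ hν).integrableOn)
    ((integrable_gaussPDF μ hν).integrableOn)).symm

lemma hasDerivAt_neg_gauss (μ : ℝ) {ν : ℝ} (hν : 0 < ν) (x : ℝ) :
    HasDerivAt (fun y => -ν ^ 2 * gaussPDF μ ν y) ((x - μ) * gaussPDF μ ν x) x := by
  have h1 : HasDerivAt (fun y : ℝ => (y - μ) ^ 2) (2 * (x - μ)) x := by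
    simpa using ((hasDerivAt_id x).sub_const μ).fun_pow 2
  have hf : HasDerivAt (fun y : ℝ => -(y - μ) ^ 2 / (2 * ν ^ 2))
      (-(2 * (x - μ)) / (2 * ν ^ 2)) x := h1.neg.div_const (2 * ν ^ 2)
  have h2 := (hf.exp.const_mul ((ν * Real.sqrt (2 * Real.pi))⁻¹)).const_mul (-ν ^ 2)
  refine h2.congr_deriv ?_
  unfold gaussPDF
  field_simp

lemma log_gaussPDF (μ : ℝ) {ν : ℝ} (hν : 0 < ν) (x : ℝ) :
    Real.log (gaussPDF μ ν x)
      = -Real.log (ν * Real.sqrt (2 * Real.pi)) + -(x - μ) ^ 2 / (2 * ν ^ 2) := by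
  unfold gaussPDF
  rw [Real.log_mul (inv_pos.2 (mul_pos hν (Real.sqrt_pos.2 (by positivity)))).ne'
    (Real.exp_pos _).ne', Real.log_inv, Real.log_exp]

/-- The differential entropy of the `(μ, ν, A)`-truncated-Gaussian density `θ` satisfies
`−∫₀^A θ(x)·log θ(x) dx = (1/2)·log(2πe·ν²) − φ`, where
`φ = log ρ + (1/2)·((A − μ)·θ(A) + μ·θ(0))`. -/
theorem tg_entropy (μ ν A : ℝ) (hν : 0 < ν) (hA : 0 < A) :
    -∫ x in (0:ℝ)..A, tgPDF μ ν A x * Real.log (tgPDF μ ν A x)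
      = (1 / 2) * Real.log (2 * Real.pi * Real.exp 1 * ν ^ 2)
        - (Real.log (tgRho μ ν A)
            + (1 / 2) * ((A - μ) * tgPDF μ ν A A + μ * tgPDF μ ν A 0)) := by
  have hgc : Continuous (gaussPDF μ ν) := continuous_gaussPDF μ ν
  have hgpos : ∀ x, 0 < gaussPDF μ ν x := gaussPDF_pos μ hν
  set c := gaussCDF μ ν A - gaussCDF μ ν 0 with hcdef
  have hI0 : ∫ x in (0:ℝ)..A, gaussPDF μ ν x = c := integral_gaussPDF μ hν 0 A
  have hc0 : (0:ℝ) < c := by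
    rw [← hI0]
    exact intervalIntegral.intervalIntegral_pos_of_pos (hgc.intervalIntegrable 0 A) hgpos hA
  have hρ : tgRho μ ν A = c⁻¹ := rfl
  have hρpos : 0 < tgRho μ ν A := by rw [hρ]; exact inv_pos.2 hc0
  set ρ := tgRho μ ν A with hρdef
  -- integration by parts
  have hIBP : ∫ x in (0:ℝ)..A, (x - μ) * ((x - μ) * gaussPDF μ ν x)
      = (A - μ) * (-ν ^ 2 * gaussPDF μ ν A) - (0 - μ) * (-ν ^ 2 * gaussPDF μ ν 0)
        - ∫ x in (0:ℝ)..A, 1 * (-ν ^ 2 * gaussPDF μ ν x) := by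
    apply intervalIntegral.integral_mul_deriv_eq_deriv_mul
    · intro x _; simpa using (hasDerivAt_id x).sub_const μ
    · intro x _; exact hasDerivAt_neg_gauss μ hν x
    · exact continuous_const.intervalIntegrable 0 A
    · exact ((continuous_id.sub continuous_const).mul hgc).intervalIntegrable 0 A
  have hI2 : ∫ x in (0:ℝ)..A, (x - μ) ^ 2 * gaussPDF μ ν x
      = ν ^ 2 * c - ν ^ 2 * ((A - μ) * gaussPDF μ ν A + μ * gaussPDF μ ν 0) := by
    have h1 : ∀ x : ℝ, (x - μ) ^ 2 * gaussPDF μ ν x = (x - μ) * ((x - μ) * gaussPDF μ ν x) :=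
      fun x => by ring
    simp_rw [h1]
    rw [hIBP]
    have h3 : ∫ x in (0:ℝ)..A, 1 * (-ν ^ 2 * gaussPDF μ ν x) = -ν ^ 2 * c := by
      simp_rw [one_mul]
      rw [intervalIntegral.integral_const_mul, hI0]
    rw [h3]; ring
  set L := Real.log ρ - Real.log (ν * Real.sqrt (2 * Real.pi)) with hLdef
  have hcong : ∫ x in (0:ℝ)..A, tgPDF μ ν A x * Real.log (tgPDF μ ν A x)
      = ∫ x in (0:ℝ)..A, ρ * gaussPDF μ ν x * (L + -(x - μ) ^ 2 / (2 * ν ^ 2)) := by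
    apply intervalIntegral.integral_congr
    intro x hx
    rw [Set.uIcc_of_le hA.le] at hx
    have hx' : tgPDF μ ν A x = ρ * gaussPDF μ ν x := by rw [tgPDF, if_pos hx]
    simp only [hx', Real.log_mul hρpos.ne' (hgpos x).ne', log_gaussPDF μ hν x, hLdef]
    ring
  have h2 : ∫ x in (0:ℝ)..A, ρ * gaussPDF μ ν x * (L + -(x - μ) ^ 2 / (2 * ν ^ 2))
      = ρ * L * c + (-(ρ / (2 * ν ^ 2)))
          * (ν ^ 2 * c - ν ^ 2 * ((A - μ) * gaussPDF μ ν A + μ * gaussPDF μ ν 0)) := by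
    have h1 : ∀ x : ℝ, ρ * gaussPDF μ ν x * (L + -(x - μ) ^ 2 / (2 * ν ^ 2))
        = ρ * L * gaussPDF μ ν x + (-(ρ / (2 * ν ^ 2))) * ((x - μ) ^ 2 * gaussPDF μ ν x) := by
      intro x
      field_simp
    simp_rw [h1]
    have ha : IntervalIntegrable (fun x => ρ * L * gaussPDF μ ν x) volume 0 A :=
      (continuous_const.mul hgc).intervalIntegrable 0 A
    have hb : IntervalIntegrable (fun x => -(ρ / (2 * ν ^ 2)) * ((x - μ) ^ 2 * gaussPDF μ ν x))
        volume 0 A := by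
      apply Continuous.intervalIntegrable
      fun_prop
    rw [intervalIntegral.integral_add ha hb,
      intervalIntegral.integral_const_mul, intervalIntegral.integral_const_mul, hI0, hI2]
  have hkey : Real.log (ν * Real.sqrt (2 * Real.pi)) + 1 / 2
      = (1 / 2) * Real.log (2 * Real.pi * Real.exp 1 * ν ^ 2) := by
    have h1 : Real.log (2 * Real.pi * Real.exp 1 * ν ^ 2)
        = Real.log (2 * Real.pi) + 1 + 2 * Real.log ν := by
      rw [Real.log_mul (by positivity) (by positivity),
        Real.log_mul (by positivity) (Real.exp_pos 1).ne',
        Real.log_exp, Real.log_pow]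
      push_cast
      ring
    rw [h1, Real.log_mul hν.ne' (Real.sqrt_pos.2 (by positivity)).ne',
      Real.log_sqrt (by positivity)]
    ring
  have hθA : tgPDF μ ν A A = ρ * gaussPDF μ ν A := by
    rw [tgPDF, if_pos (Set.mem_Icc.2 ⟨hA.le, le_refl A⟩)]
  have hθ0 : tgPDF μ ν A 0 = ρ * gaussPDF μ ν 0 := by
    rw [tgPDF, if_pos (Set.mem_Icc.2 ⟨le_refl 0, hA.le⟩)]
  rw [hcong, h2, hθA, hθ0, ← hkey, hLdef, hρ]
  have hν2 : (ν : ℝ) ^ 2 ≠ 0 := by positivity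
  field_simp
  ring
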